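/- arXiv:1804.09273 — 8 statements merged into one kernel-verified Lean document; each statement's English description precedes it below -/
import Mathlib

section
/- Let S_A be a subdivision operator of order d, let ℓ ≥ d, and let τ ∈ ℝ. If S_A satisfies the spectral condition with spectral polynomials p_{τ,k}(x) = (x+τ)^k/k! for k = 0,…,ℓ (i.e., S_A v_{p_{τ,k}} = 2^{-k} v_{p_{τ,k}}), then the associated Hermite subdivision scheme reproduces all polynomials of degree at most ℓ with respect to the parameter τ; that is, for each k ≤ ℓ, starting from initial data c^{[0]}_j = [q_k(j+τ), q_k'(j+τ), …, q_k^{(d)}(j+τ)]^T with q_k(x) = x^k/k!, the iterates c^{[n]} = D^{-n} S_A^n c^{[0]} satisfy (c^{[n]}_j)_m = q_k^{(m)}(2^{-n}(j+τ)) for all j ∈ ℤ, n ∈ ℕ, and m = 0,…,d. -/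
noncomputable def subd {d : ℕ} (A : ℤ → Matrix (Fin (d+1)) (Fin (d+1)) ℝ)
    (c : ℤ → Fin (d+1) → ℝ) : ℤ → Fin (d+1) → ℝ :=
  fun j => ∑ᶠ k : ℤ, (A (j - 2*k)).mulVec (c k)

noncomputable def vF (d : ℕ) (f : ℝ → ℝ) : ℤ → Fin (d+1) → ℝ :=
  fun j m => iteratedDeriv (m : ℕ) f (j : ℝ)

noncomputable def vP (d : ℕ) (p : Polynomial ℝ) : ℤ → Fin (d+1) → ℝ :=
  fun j m => (Polynomial.derivative^[(m : ℕ)] p).eval (j : ℝ)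

noncomputable def Dinv (d n : ℕ) (c : ℤ → Fin (d+1) → ℝ) : ℤ → Fin (d+1) → ℝ :=
  fun j m => (2:ℝ)^(n * (m:ℕ)) * c j m

def Reproduces {d : ℕ} (A : ℤ → Matrix (Fin (d+1)) (Fin (d+1)) ℝ) (τ : ℝ) (f : ℝ → ℝ) : Prop :=
  ∀ (n : ℕ) (j : ℤ) (m : Fin (d+1)),
    Dinv d n ((subd A)^[n] (fun i m => iteratedDeriv (m:ℕ) f ((i:ℝ)+τ))) j m
      = iteratedDeriv (m:ℕ) f (((2:ℝ)^n)⁻¹ * ((j:ℝ)+τ))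

/-- iterated derivative of the shifted monomial -/
lemma iterD (k : ℕ) (τ : ℝ) (m : ℕ) :
    iteratedDeriv m (fun x : ℝ => (x+τ)^k / k.factorial)
      = fun x => (k.descFactorial m : ℝ) * (x+τ)^(k-m) / k.factorial := by
  induction m with
  | zero => simp
  | succ m ih =>
    rw [iteratedDeriv_succ, ih]
    funext x
    have h1 : deriv (fun x : ℝ => (k.descFactorial m : ℝ) * (x+τ)^(k-m) / k.factorial) x
        = (k.descFactorial m : ℝ) / k.factorial * deriv (fun x : ℝ => (x+τ)^(k-m)) x := by
      have : (fun x : ℝ => (k.descFactorial m : ℝ) * (x+τ)^(k-m) / k.factorial)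
          = fun x : ℝ => (k.descFactorial m : ℝ) / k.factorial * (x+τ)^(k-m) := by
        funext y; ring
      rw [this, deriv_const_mul]
      exact (differentiable_id.add_const τ).pow _ |>.differentiableAt
    have h2 : deriv (fun x : ℝ => (x+τ)^(k-m)) x = (k-m : ℕ) * (x+τ)^(k-m-1) := by
      have := deriv_comp_add_const (fun y : ℝ => y^(k-m)) τ x
      simp only [deriv_pow_field] at this
      exact this
    rw [h1, h2, Nat.descFactorial_succ, Nat.sub_sub]
    push_cast
    ring

lemma subd_smul {d : ℕ} (A : ℤ → Matrix (Fin (d+1)) (Fin (d+1)) ℝ)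
    (s : ℝ) (c : ℤ → Fin (d+1) → ℝ) :
    subd A (fun j => s • c j) = fun j => s • subd A c j := by
  funext j
  simp only [subd]
  rw [smul_finsum]
  congr 1
  funext kk
  rw [Matrix.mulVec_smul]

theorem spectral_condition_implies_reproduction {d : ℕ}
    (A : ℤ → Matrix (Fin (d+1)) (Fin (d+1)) ℝ)
    (hfin : (Function.support A).Finite)
    (ℓ : ℕ) (hdl : d ≤ ℓ) (τ : ℝ)
    (hspec : ∀ k ≤ ℓ,
      subd A (vF d (fun x => (x+τ)^k / k.factorial))
        = fun j => ((2:ℝ)^k)⁻¹ • vF d (fun x => (x+τ)^k / k.factorial) j) :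
    ∀ k ≤ ℓ, Reproduces A τ (fun x => x^k / k.factorial) := by
  intro k hk n j m
  set v : ℤ → Fin (d+1) → ℝ := vF d (fun x => (x+τ)^k / k.factorial) with hv
  -- the initial data coincides with v
  have hinit : (fun i : ℤ => fun m : Fin (d+1) =>
      iteratedDeriv (m:ℕ) (fun x : ℝ => x^k / k.factorial) ((i:ℝ)+τ)) = v := by
    funext i m
    simp only [hv, vF]
    have h0 : (fun x : ℝ => x^k / (k.factorial:ℝ)) = fun x => (x+(0:ℝ))^k / k.factorial := by
      funext x; rw [add_zero]
    rw [h0, iterD, iterD]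
    simp
  -- iterate the eigen-relation
  have hiter : ∀ N : ℕ, (subd A)^[N] v = fun i => (((2:ℝ)^k)⁻¹)^N • v i := by
    intro N
    induction N with
    | zero => funext i; simp
    | succ N ihN =>
      rw [Function.iterate_succ_apply', ihN, subd_smul, hv, hspec k hk]
      funext i
      rw [pow_succ]
      simp [smul_smul, mul_comm]
  rw [hinit, hiter n]
  simp only [Dinv, hv, vF, Pi.smul_apply, smul_eq_mul]
  have hrhs : iteratedDeriv (m:ℕ) (fun x : ℝ => x^k / k.factorial) (((2:ℝ)^n)⁻¹ * ((j:ℝ)+τ))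
      = (k.descFactorial (m:ℕ) : ℝ) * (((2:ℝ)^n)⁻¹ * ((j:ℝ)+τ))^(k-(m:ℕ)) / k.factorial := by
    have h0 : (fun x : ℝ => x^k / (k.factorial:ℝ)) = fun x => (x+(0:ℝ))^k / k.factorial := by
      funext x; rw [add_zero]
    rw [h0, iterD]; simp
  rw [iterD, hrhs]
  simp only []
  rcases le_or_gt (m:ℕ) k with hm | hm
  · have hy : (((2:ℝ)^n)⁻¹ * ((j:ℝ)+τ))^(k-(m:ℕ))
        = (((2:ℝ)^n)⁻¹)^(k-(m:ℕ)) * ((j:ℝ)+τ)^(k-(m:ℕ)) := by rw [mul_pow]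
    rw [hy]
    have h3 : (2:ℝ)^(n*(m:ℕ)) * ((2:ℝ)^n)^(k-(m:ℕ)) = ((2:ℝ)^k)^n := by
      rw [← pow_mul, ← pow_add, show n*(m:ℕ) + n*(k-(m:ℕ)) = k*n by
        rw [← Nat.mul_add, Nat.add_sub_cancel' hm, mul_comm], pow_mul]
    field_simp
    rw [one_div, one_div, inv_pow, inv_pow, ← h3, mul_inv, mul_inv_cancel_left₀ (by positivity)]
    ring
  · have : k.descFactorial (m:ℕ) = 0 := Nat.descFactorial_eq_zero_iff_lt.mpr hm
    simp [this]
end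

section
/- Let S_A be a subdivision operator of order d, let ℓ ≥ d, and let τ ∈ ℝ. If the associated Hermite scheme reproduces all polynomials of degree at most ℓ with respect to the parameter τ, then S_A satisfies the spectral condition with spectral polynomials p_{τ,k}(x) = (x+τ)^k/k!, i.e., S_A v_{p_{τ,k}} = 2^{-k} v_{p_{τ,k}} for k = 0,…,ℓ. -/
open Polynomial in
lemma iteratedDeriv_polyEval (p : Polynomial ℝ) (n : ℕ) :
    iteratedDeriv n (fun x => p.eval x) = fun x => (derivative^[n] p).eval x := by
  induction n with
  | zero => simp
  | succ n ih =>
      rw [iteratedDeriv_succ, ih]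
      funext x
      rw [Function.iterate_succ_apply']
      exact Polynomial.deriv (p := derivative^[n] p)

theorem reproduction_implies_spectral_condition {d : ℕ}
    (A : ℤ → Matrix (Fin (d+1)) (Fin (d+1)) ℝ)
    (hfin : (Function.support A).Finite)
    (ℓ : ℕ) (hdl : d ≤ ℓ) (τ : ℝ)
    (hrep : ∀ p : Polynomial ℝ, p.natDegree ≤ ℓ → Reproduces A τ (fun x => p.eval x)) :
    ∀ k ≤ ℓ,
      subd A (vF d (fun x => (x+τ)^k / k.factorial))
        = fun j => ((2:ℝ)^k)⁻¹ • vF d (fun x => (x+τ)^k / k.factorial) j := by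
  intro k hk
  set a : ℝ := ((k.factorial : ℝ))⁻¹ with ha
  have ha0 : a ≠ 0 := by positivity
  set p : Polynomial ℝ := Polynomial.C a * Polynomial.X ^ k with hp
  have hdeg : p.natDegree ≤ ℓ := by
    rw [hp, Polynomial.natDegree_C_mul ha0, Polynomial.natDegree_X_pow]; exact hk
  -- f x = p.eval (x + τ)
  have hf : (fun x : ℝ => (x+τ)^k / (k.factorial : ℝ)) = fun x => p.eval (x + τ) := by
    funext x
    rw [hp, Polynomial.eval_mul, Polynomial.eval_C, Polynomial.eval_pow, Polynomial.eval_X,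
      ha, div_eq_mul_inv, mul_comm]
  -- initial data equals vF
  have hv : (fun (i : ℤ) (m : Fin (d+1)) =>
      iteratedDeriv (m:ℕ) (fun x => p.eval x) ((i:ℝ)+τ))
      = vF d (fun x => (x+τ)^k / k.factorial) := by
    funext i m
    rw [vF, hf]
    exact (congrFun (iteratedDeriv_comp_add_const (m:ℕ) (fun x => p.eval x) τ) (i:ℝ)).symm
  have H := hrep p hdeg
  have Hder : ∀ m : ℕ, Polynomial.derivative^[m] p
      = Polynomial.C (a * (k.descFactorial m : ℝ)) * Polynomial.X ^ (k - m) := by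
    intro m
    rw [hp, Polynomial.iterate_derivative_C_mul,
      Polynomial.iterate_derivative_X_pow_eq_C_mul, ← mul_assoc, ← Polynomial.C_mul]
  -- conclude
  funext j m
  have H1 := H 1 j m
  rw [Reproduces] at H
  simp only [Dinv, Function.iterate_one, pow_one, one_mul] at H1
  rw [hv] at H1
  have Hval : subd A (vF d (fun x => (x+τ)^k / k.factorial)) j m
      = ((2:ℝ)^(m:ℕ))⁻¹ * iteratedDeriv (m:ℕ) (fun x => p.eval x) ((2:ℝ)⁻¹ * ((j:ℝ)+τ)) := by
    rw [← H1]
    field_simp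
  rw [Hval]
  have hvf : vF d (fun x => (x+τ)^k / k.factorial) j m
      = iteratedDeriv (m:ℕ) (fun x => p.eval x) ((j:ℝ)+τ) := by
    rw [vF, hf]
    exact congrFun (iteratedDeriv_comp_add_const (m:ℕ) (fun x => p.eval x) τ) (j:ℝ)
  rw [Pi.smul_apply, smul_eq_mul, hvf, iteratedDeriv_polyEval, Hder]
  simp only [Polynomial.eval_mul, Polynomial.eval_C, Polynomial.eval_pow, Polynomial.eval_X]
  rcases le_or_gt (m:ℕ) k with hm | hm
  · rw [mul_pow, inv_pow]
    have h2 : ((2:ℝ)^(m:ℕ))⁻¹ * ((2:ℝ)^(k - (m:ℕ)))⁻¹ = ((2:ℝ)^k)⁻¹ := by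
      rw [← mul_inv, ← pow_add, Nat.add_sub_cancel' hm]
    rw [← h2]; ring
  · rw [Nat.descFactorial_eq_zero_iff_lt.mpr hm]
    simp
end

section
/- Let S_A be a subdivision operator of order d satisfying the spectral condition with polynomials p_{τ,k}(x)=(x+τ)^k/k!, k=0,…,ℓ (ℓ ≥ d). If the spectral polynomials of the de Rham transform S_Ā satisfy the recursion p̄_0 = 1 and p̄_k = p_{τ,k} + Σ_{m=0}^{k−1} μ_{k,m} p̄_m where μ_{k,m} = −λ_{k,m} · 2^{m−k}/(2^k − 2^m) and the λ_{k,m} are determined by p_{τ,k}(2x+1) = 2^k p_{τ,k}(x) + Σ_{m=0}^{k−1} λ_{k,m} p̄_m(x), then p̄_k(x) = (x + (3τ−1)/2)^k/k! for all k = 0,…,ℓ. -/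
open Polynomial Finset

lemma expand_shift (a b : ℝ) (k : ℕ) :
    C ((k.factorial:ℝ)⁻¹) * (X + C a)^k
      = ∑ m ∈ range (k+1), C ((a-b)^(k-m) * (((k-m).factorial:ℝ))⁻¹) *
          (C ((m.factorial:ℝ)⁻¹) * (X + C b)^m) := by
  apply Polynomial.funext
  intro r
  simp only [eval_mul, eval_add, eval_pow, eval_C, eval_X, eval_finset_sum]
  rw [show r + a = (r + b) + (a - b) by ring, add_pow, Finset.mul_sum]
  refine Finset.sum_congr rfl fun m hm => ?_
  have hmk : m ≤ k := Nat.lt_succ_iff.mp (mem_range.mp hm)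
  rw [Nat.cast_choose ℝ hmk]
  have h1 : (m.factorial:ℝ) ≠ 0 := Nat.cast_ne_zero.mpr m.factorial_ne_zero
  have h2 : ((k-m).factorial:ℝ) ≠ 0 := Nat.cast_ne_zero.mpr (k-m).factorial_ne_zero
  have h3 : (k.factorial:ℝ) ≠ 0 := Nat.cast_ne_zero.mpr k.factorial_ne_zero
  field_simp

lemma extract_coeffs (b : ℝ) (k : ℕ) (f g : ℕ → ℝ)
    (h : ∑ m ∈ range k, C (f m) * (C ((m.factorial:ℝ)⁻¹) * (X + C b)^m)
       = ∑ m ∈ range k, C (g m) * (C ((m.factorial:ℝ)⁻¹) * (X + C b)^m)) :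
    ∀ m < k, f m = g m := by
  intro n hn
  have h2 := congrArg (fun p : ℝ[X] => (p.comp (X - C b)).coeff n) h
  simp only [Polynomial.sum_comp, mul_comp, C_comp, pow_comp, add_comp, X_comp, sub_add_cancel,
    finset_sum_coeff, coeff_C_mul, coeff_X_pow, mul_ite, mul_one, mul_zero,
    Finset.sum_ite_eq, Finset.sum_ite_eq', mem_range, hn, if_pos, if_true] at h2
  have h1 : ((n.factorial:ℝ))⁻¹ ≠ 0 := by
    simpa using n.factorial_ne_zero
  field_simp at h2
  exact h2

theorem deRham_spectral_polys {d : ℕ}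
    (A : ℤ → Matrix (Fin (d+1)) (Fin (d+1)) ℝ)
    (hfin : (Function.support A).Finite)
    (ℓ : ℕ) (hdl : d ≤ ℓ) (τ : ℝ)
    (hspec : ∀ k ≤ ℓ,
      subd A (vF d (fun x => (x+τ)^k / k.factorial))
        = fun j => ((2:ℝ)^k)⁻¹ • vF d (fun x => (x+τ)^k / k.factorial) j)
    (pbar : ℕ → Polynomial ℝ) (lam : ℕ → ℕ → ℝ)
    (h0 : pbar 0 = 1)
    (hrec : ∀ k, 1 ≤ k → k ≤ ℓ →
      pbar k = Polynomial.C ((k.factorial : ℝ)⁻¹) * (Polynomial.X + Polynomial.C τ)^k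
        + ∑ m ∈ Finset.range k,
            Polynomial.C (-(lam k m) * ((2:ℝ)^(k-m))⁻¹ / ((2:ℝ)^k - (2:ℝ)^m)) * pbar m)
    (hlam : ∀ k, 1 ≤ k → k ≤ ℓ →
      (Polynomial.C ((k.factorial : ℝ)⁻¹) * (Polynomial.X + Polynomial.C τ)^k).comp
          (2 * Polynomial.X + 1)
        = (2:ℝ)^k • (Polynomial.C ((k.factorial : ℝ)⁻¹) * (Polynomial.X + Polynomial.C τ)^k)
          + ∑ m ∈ Finset.range k, Polynomial.C (lam k m) * pbar m) :
    ∀ k ≤ ℓ,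
      pbar k = Polynomial.C ((k.factorial : ℝ)⁻¹)
        * (Polynomial.X + Polynomial.C ((3*τ-1)/2))^k := by
  intro k
  induction k using Nat.strong_induction_on with
  | _ k IH =>
  intro hk
  rcases Nat.eq_zero_or_pos k with rfl | hk1
  · simp [h0]
  have hIH : ∀ m, m < k → pbar m
      = C ((m.factorial:ℝ)⁻¹) * (X + C ((3*τ-1)/2))^m :=
    fun m hm => IH m hm (hm.le.trans hk)
  have hq : (C ((k.factorial:ℝ)⁻¹) * (X + C τ)^k).comp (2*X+1)
      = ∑ m ∈ range (k+1), C ((2:ℝ)^k * ((1-τ)^(k-m) * (((k-m).factorial:ℝ))⁻¹)) *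
          (C ((m.factorial:ℝ)⁻¹) * (X + C ((3*τ-1)/2))^m) := by
    apply Polynomial.funext
    intro r
    simp only [eval_comp, eval_mul, eval_add, eval_pow, eval_C, eval_X, eval_finset_sum,
      eval_ofNat, eval_one]
    rw [show (2*r+1)+τ = 2*((r + (3*τ-1)/2) + (1-τ)) by ring, mul_pow, add_pow,
      Finset.mul_sum, Finset.mul_sum]
    refine Finset.sum_congr rfl fun m hm => ?_
    have hmk : m ≤ k := Nat.lt_succ_iff.mp (mem_range.mp hm)
    rw [Nat.cast_choose ℝ hmk]
    have h1 : (m.factorial:ℝ) ≠ 0 := Nat.cast_ne_zero.mpr m.factorial_ne_zero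
    have h2 : ((k-m).factorial:ℝ) ≠ 0 := Nat.cast_ne_zero.mpr (k-m).factorial_ne_zero
    have h3 : (k.factorial:ℝ) ≠ 0 := Nat.cast_ne_zero.mpr k.factorial_ne_zero
    field_simp
  have hq2 : C ((k.factorial:ℝ)⁻¹) * (X + C τ)^k
      = ∑ m ∈ range (k+1), C (((1-τ)/2)^(k-m) * (((k-m).factorial:ℝ))⁻¹) *
          (C ((m.factorial:ℝ)⁻¹) * (X + C ((3*τ-1)/2))^m) := by
    have h := expand_shift τ ((3*τ-1)/2) k
    rw [show τ - (3*τ-1)/2 = (1-τ)/2 by ring] at h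
    exact h
  have H := hlam k hk1 hk
  rw [hq, Polynomial.smul_eq_C_mul, hq2, Finset.mul_sum] at H
  have hre : ∀ m ∈ range (k+1),
      C ((2:ℝ)^k) * (C (((1-τ)/2)^(k-m) * (((k-m).factorial:ℝ))⁻¹) *
          (C ((m.factorial:ℝ)⁻¹) * (X + C ((3*τ-1)/2))^m))
        = C ((2:ℝ)^k * (((1-τ)/2)^(k-m) * (((k-m).factorial:ℝ))⁻¹)) *
          (C ((m.factorial:ℝ)⁻¹) * (X + C ((3*τ-1)/2))^m) := by
    intro m _
    rw [← mul_assoc, ← C_mul]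
  rw [Finset.sum_congr rfl hre] at H
  have hps : ∑ m ∈ range k, C (lam k m) * pbar m
      = ∑ m ∈ range (k+1), C (if m < k then lam k m else 0) *
          (C ((m.factorial:ℝ)⁻¹) * (X + C ((3*τ-1)/2))^m) := by
    rw [sum_range_succ, if_neg (lt_irrefl k), C_0, zero_mul, add_zero]
    refine Finset.sum_congr rfl fun m hm => ?_
    rw [hIH m (mem_range.mp hm), if_pos (mem_range.mp hm)]
  rw [hps, ← Finset.sum_add_distrib] at H
  have hadd : ∀ m ∈ range (k+1),
      C ((2:ℝ)^k * (((1-τ)/2)^(k-m) * (((k-m).factorial:ℝ))⁻¹)) *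
          (C ((m.factorial:ℝ)⁻¹) * (X + C ((3*τ-1)/2))^m)
        + C (if m < k then lam k m else 0) *
          (C ((m.factorial:ℝ)⁻¹) * (X + C ((3*τ-1)/2))^m)
      = C ((2:ℝ)^k * (((1-τ)/2)^(k-m) * (((k-m).factorial:ℝ))⁻¹)
            + (if m < k then lam k m else 0)) *
          (C ((m.factorial:ℝ)⁻¹) * (X + C ((3*τ-1)/2))^m) := by
    intro m _
    rw [← add_mul, ← C_add]
  rw [Finset.sum_congr rfl hadd] at H
  have hlam' := extract_coeffs ((3*τ-1)/2) (k+1)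
    (fun m => (2:ℝ)^k * ((1-τ)^(k-m) * (((k-m).factorial:ℝ))⁻¹))
    (fun m => (2:ℝ)^k * (((1-τ)/2)^(k-m) * (((k-m).factorial:ℝ))⁻¹)
        + (if m < k then lam k m else 0)) H
  -- now final assembly
  have Hr := hrec k hk1 hk
  rw [hq2] at Hr
  have hsum2 : ∑ m ∈ range k, C (-(lam k m) * ((2:ℝ)^(k-m))⁻¹ / ((2:ℝ)^k - (2:ℝ)^m)) * pbar m
      = ∑ m ∈ range k, C (-(((1-τ)/2)^(k-m) * (((k-m).factorial:ℝ))⁻¹)) *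
          (C ((m.factorial:ℝ)⁻¹) * (X + C ((3*τ-1)/2))^m) := by
    refine Finset.sum_congr rfl fun m hm => ?_
    have hmk : m < k := mem_range.mp hm
    rw [hIH m hmk]
    congr 1
    congr 1
    have hl : lam k m = (2:ℝ)^k * ((1-τ)^(k-m) * (((k-m).factorial:ℝ))⁻¹)
        - (2:ℝ)^k * (((1-τ)/2)^(k-m) * (((k-m).factorial:ℝ))⁻¹) := by
      have h := hlam' m (Nat.lt_succ_of_lt hmk)
      simp only [if_pos hmk] at h
      linarith
    rw [hl]
    set j := k - m with hjdef
    have hkm : k = m + j := by omega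
    have hj1 : 1 ≤ j := by omega
    have h2m : (2:ℝ)^m ≠ 0 := by positivity
    have h2jne : (2:ℝ)^j ≠ 0 := by positivity
    have h1lt : (1:ℝ) < 2^j := by
      calc (1:ℝ) = 1^j := (one_pow j).symm
      _ < 2^j := by
        apply pow_lt_pow_left₀ (by norm_num) (by norm_num)
        omega
    have h2j : (2:ℝ)^j - 1 ≠ 0 := sub_ne_zero.mpr (ne_of_gt h1lt)
    have hfact : ((j.factorial:ℝ)) ≠ 0 := Nat.cast_ne_zero.mpr j.factorial_ne_zero
    have hden : (2:ℝ)^m * (2:ℝ)^j - (2:ℝ)^m ≠ 0 := by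
      have he : (2:ℝ)^m * (2:ℝ)^j - (2:ℝ)^m = 2^m * (2^j - 1) := by ring
      rw [he]; exact mul_ne_zero h2m h2j
    rw [hkm, pow_add]
    have hrew : (1-τ)^j = 2^j * ((1-τ)/2)^j := by
      rw [← mul_pow]; congr 1; ring
    rw [hrew]
    field_simp
  rw [hsum2, sum_range_succ] at Hr
  rw [Hr, add_right_comm, ← Finset.sum_add_distrib]
  have hz : ∑ m ∈ range k,
      (C (((1-τ)/2)^(k-m) * (((k-m).factorial:ℝ))⁻¹) *
          (C ((m.factorial:ℝ)⁻¹) * (X + C ((3*τ-1)/2))^m)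
        + C (-(((1-τ)/2)^(k-m) * (((k-m).factorial:ℝ))⁻¹)) *
          (C ((m.factorial:ℝ)⁻¹) * (X + C ((3*τ-1)/2))^m)) = 0 := by
    apply Finset.sum_eq_zero
    intro m _
    rw [← add_mul, ← C_add, add_neg_cancel, C_0, zero_mul]
  rw [hz, zero_add, Nat.sub_self]
  norm_num
end

section
/- Let S_A be a subdivision operator of order d whose associated Hermite scheme is C^d-convergent with parametrization τ, and suppose S_A satisfies the spectral condition of order ℓ ≥ d with spectral polynomials p_{τ,k}(x) = Σ_{s=0}^{k} c_{ks}(x+τ)^s (with c_{kk} = 1/k!). Then for initial data c^{[0]}_k given by (c^{[0]}_k)_j = [p_{τ,k}(j), …, p_{τ,k}^{(d)}(j)]^T, the iterates c^{[n]}_k = D^{-n} 2^{-kn} c^{[0]}_k converge, uniformly on every compact set K ⊂ ℝ, to Φ_k(2^{-n}(j+τ)) where Φ_k(x) = [q_k(x), …, q_k^{(d)}(x)]^T and q_k(x) = x^k/k!; that is, lim_{n→∞} sup_{j∈ℤ∩K·2^n, 2^{-n}(j+τ)∈K} |(c^{[n]}_k)_j − Φ_k(2^{-n}(j+τ))|_∞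 = 0. -/
private lemma iter_sum (c : ℕ → ℝ) (τ : ℝ) (F : Finset ℕ) : ∀ mv : ℕ,
    iteratedDeriv mv (fun x : ℝ => ∑ s ∈ F, c s * (x + τ) ^ s)
      = fun x : ℝ => ∑ s ∈ F, c s * (s.descFactorial mv : ℝ) * (x + τ) ^ (s - mv) := by
  intro mv
  induction mv with
  | zero => simp
  | succ m ih =>
    rw [iteratedDeriv_succ, ih]
    funext x
    have h : HasDerivAt
        (fun x : ℝ => ∑ s ∈ F, c s * (s.descFactorial m : ℝ) * (x + τ) ^ (s - m))
        (∑ s ∈ F, c s * (s.descFactorial (m + 1) : ℝ) * (x + τ) ^ (s - (m + 1))) x := by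
      refine HasDerivAt.fun_sum fun s _ => ?_
      have h1 : HasDerivAt (fun x : ℝ => (x + τ) ^ (s - m))
          (((s - m : ℕ) : ℝ) * (x + τ) ^ (s - m - 1)) x := by
        simpa using ((hasDerivAt_id x).add_const τ).fun_pow (s - m)
      have h2 := h1.const_mul (c s * (s.descFactorial m : ℝ))
      refine h2.congr_deriv ?_
      rw [Nat.descFactorial_succ, Nat.sub_sub]
      push_cast
      ring
    exact h.deriv

private lemma iter_monomial (a : ℝ) (p : ℕ) (mv : ℕ) :
    iteratedDeriv mv (fun x : ℝ => a * x ^ p)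
      = fun x : ℝ => a * (p.descFactorial mv : ℝ) * x ^ (p - mv) := by
  have h : (fun x : ℝ => a * x ^ p)
      = fun x : ℝ => ∑ s ∈ ({p} : Finset ℕ), (fun _ : ℕ => a) s * (x + 0) ^ s := by
    funext x; simp
  rw [h, iter_sum]
  funext x; simp

private lemma descFactorial_le_factorial (s mv : ℕ) : s.descFactorial mv ≤ s.factorial := by
  rcases le_or_gt mv s with h | h
  · calc s.descFactorial mv = 1 * s.descFactorial mv := (one_mul _).symm
    _ ≤ (s - mv).factorial * s.descFactorial mv :=
        Nat.mul_le_mul_right _ (Nat.one_le_iff_ne_zero.mpr (Nat.factorial_pos _).ne')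
    _ = s.factorial := Nat.factorial_mul_descFactorial h
  · rw [Nat.descFactorial_eq_zero_iff_lt.mpr h]; exact Nat.zero_le _

theorem spectral_iterates_generate_monomial (d ℓ k : ℕ) (hdl : d ≤ ℓ) (hk : k ≤ ℓ)
    (τ : ℝ) (c : ℕ → ℝ) (hck : c k = (k.factorial : ℝ)⁻¹)
    (K : Set ℝ) (hK : IsCompact K) :
    ∀ ε > 0, ∃ N : ℕ, ∀ n ≥ N, ∀ j : ℤ,
      ((2:ℝ)^n)⁻¹ * ((j:ℝ)+τ) ∈ K →
      ∀ m : Fin (d+1),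
        |(2:ℝ)^(n*(m:ℕ)) * (((2:ℝ)^k)⁻¹)^n
            * iteratedDeriv (m:ℕ)
                (fun x : ℝ => ∑ s ∈ Finset.range (k+1), c s * (x+τ)^s) (j:ℝ)
          - iteratedDeriv (m:ℕ) (fun x : ℝ => x^k / k.factorial)
              (((2:ℝ)^n)⁻¹ * ((j:ℝ)+τ))| < ε := by
  intro ε hε
  obtain ⟨M0, hM0⟩ : ∃ r, K ⊆ Metric.closedBall 0 r := hK.isBounded.subset_closedBall 0
  set M : ℝ := max 1 M0 with hMdef
  have hM1 : (1:ℝ) ≤ M := le_max_left _ _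
  have hM0' : (0:ℝ) < M := lt_of_lt_of_le one_pos hM1
  set B : ℝ := ∑ s ∈ Finset.range k, |c s| * (s.factorial : ℝ) * M ^ s with hBdef
  have hB0 : 0 ≤ B := Finset.sum_nonneg fun s _ => by positivity
  obtain ⟨N, hN⟩ : ∃ N : ℕ, ((1:ℝ)/2)^N < ε / (B+1) :=
    exists_pow_lt_of_lt_one (by positivity) (by norm_num)
  refine ⟨N, fun n hn j hj m => ?_⟩
  set mv := (m : ℕ) with hmv
  set t : ℝ := (2:ℝ)^n with htdef
  have ht0 : (0:ℝ) < t := by positivity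
  have ht1 : (1:ℝ) ≤ t := by rw [htdef]; exact one_le_pow₀ (by norm_num)
  set y : ℝ := ((2:ℝ)^n)⁻¹ * ((j:ℝ)+τ) with hydef
  have hyM : |y| ≤ M := by
    have := hM0 hj
    rw [Metric.mem_closedBall, Real.dist_eq, sub_zero] at this
    exact this.trans (le_max_right _ _)
  have hjy : ((j:ℝ)+τ) = t * y := by
    rw [hydef, htdef]; field_simp
  have hjτ : |(j:ℝ)+τ| ≤ t * M := by
    rw [hjy, abs_mul, abs_of_pos ht0]
    exact mul_le_mul_of_nonneg_left hyM ht0.le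
  -- rewrite derivatives
  have hmono : (fun x : ℝ => x^k / (k.factorial : ℝ)) = fun x : ℝ => (k.factorial : ℝ)⁻¹ * x^k := by
    funext x; rw [div_eq_inv_mul]
  rw [iter_sum, hmono, iter_monomial]
  beta_reduce
  have hcoef : (2:ℝ)^(n*mv) * (((2:ℝ)^k)⁻¹)^n = t^mv * (t^k)⁻¹ := by
    rw [htdef]
    simp only [← inv_pow, ← pow_mul]
    rw [mul_comm k n]
  rw [hcoef, Finset.sum_range_succ]
  have hcancel : t^mv * (t^k)⁻¹ * (c k * (k.descFactorial mv : ℝ) * ((j:ℝ)+τ)^(k-mv))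
      = (k.factorial : ℝ)⁻¹ * (k.descFactorial mv : ℝ) * y^(k-mv) := by
    rcases le_or_gt mv k with h | h
    · have hpow : t^mv * (t^k)⁻¹ = (t⁻¹)^(k-mv) := by
        have hne : t ≠ 0 := ht0.ne'
        rw [inv_pow]
        field_simp
        rw [← pow_add, Nat.add_sub_cancel' h]
      have hy' : y^(k-mv) = (t⁻¹)^(k-mv) * ((j:ℝ)+τ)^(k-mv) := by
        rw [← mul_pow, hydef, htdef]
      rw [hpow, hy', hck]; ring
    · rw [Nat.descFactorial_eq_zero_iff_lt.mpr h]
      simp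
  have hsplit : t^mv * (t^k)⁻¹ *
        ((∑ s ∈ Finset.range k, c s * (s.descFactorial mv : ℝ) * ((j:ℝ)+τ)^(s-mv))
          + c k * (k.descFactorial mv : ℝ) * ((j:ℝ)+τ)^(k-mv))
      - (k.factorial : ℝ)⁻¹ * (k.descFactorial mv : ℝ) * y^(k-mv)
      = t^mv * (t^k)⁻¹ *
        (∑ s ∈ Finset.range k, c s * (s.descFactorial mv : ℝ) * ((j:ℝ)+τ)^(s-mv)) := by
    rw [mul_add, ← hcancel]; ring
  rw [hsplit]
  -- bound the remainder
  have hq0 : 0 ≤ t^mv * (t^k)⁻¹ := by positivity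
  have hterm : ∀ s ∈ Finset.range k,
      t^mv * (t^k)⁻¹ * |c s * (s.descFactorial mv : ℝ) * ((j:ℝ)+τ)^(s-mv)|
        ≤ t⁻¹ * (|c s| * (s.factorial : ℝ) * M ^ s) := by
    intro s hs
    rw [Finset.mem_range] at hs
    rcases le_or_gt mv s with h | h
    · have h1 : |c s * (s.descFactorial mv : ℝ) * ((j:ℝ)+τ)^(s-mv)|
          ≤ |c s| * (s.descFactorial mv : ℝ) * (t*M)^(s-mv) := by
        rw [abs_mul, abs_mul, abs_of_nonneg (by positivity : (0:ℝ) ≤ (s.descFactorial mv : ℝ))]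
        refine mul_le_mul_of_nonneg_left ?_ (by positivity)
        rw [abs_pow]
        exact pow_le_pow_left₀ (abs_nonneg _) hjτ _
      have h2 : t^mv * (t^k)⁻¹ * ((t*M)^(s-mv)) ≤ t⁻¹ * M ^ s := by
        have he : t^mv * (t^k)⁻¹ * ((t*M)^(s-mv)) = t^s * (t^k)⁻¹ * M^(s-mv) := by
          rw [mul_pow]
          have hts : t^mv * t^(s-mv) = t^s := by rw [← pow_add, Nat.add_sub_cancel' h]
          calc t^mv * (t^k)⁻¹ * (t^(s-mv) * M^(s-mv))
              = t^mv * t^(s-mv) * (t^k)⁻¹ * M^(s-mv) := by ring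
            _ = t^s * (t^k)⁻¹ * M^(s-mv) := by rw [hts]
        rw [he]
        have h3 : t^s * (t^k)⁻¹ ≤ t⁻¹ := by
          have hk1 : s + 1 ≤ k := hs
          have hst : t^s * t ≤ t^k := by
            rw [← pow_succ]
            exact pow_le_pow_right₀ ht1 hk1
          have hkpos : 0 < t^k := pow_pos ht0 k
          rw [← div_eq_mul_inv, div_le_iff₀ hkpos, inv_mul_eq_div, le_div_iff₀ ht0]
          exact hst
        have h4 : M^(s-mv) ≤ M^s := pow_le_pow_right₀ hM1 (Nat.sub_le s mv)
        calc t^s * (t^k)⁻¹ * M^(s-mv) ≤ t⁻¹ * M^(s-mv) :=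
              mul_le_mul_of_nonneg_right h3 (by positivity)
          _ ≤ t⁻¹ * M^s := mul_le_mul_of_nonneg_left h4 (by positivity)
      have h5 : (s.descFactorial mv : ℝ) ≤ (s.factorial : ℝ) := by
        exact_mod_cast descFactorial_le_factorial s mv
      calc t^mv * (t^k)⁻¹ * |c s * (s.descFactorial mv : ℝ) * ((j:ℝ)+τ)^(s-mv)|
          ≤ t^mv * (t^k)⁻¹ * (|c s| * (s.descFactorial mv : ℝ) * (t*M)^(s-mv)) :=
            mul_le_mul_of_nonneg_left h1 hq0
        _ = |c s| * (s.descFactorial mv : ℝ) * (t^mv * (t^k)⁻¹ * (t*M)^(s-mv)) := by ring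
        _ ≤ |c s| * (s.descFactorial mv : ℝ) * (t⁻¹ * M^s) :=
            mul_le_mul_of_nonneg_left h2 (by positivity)
        _ ≤ |c s| * (s.factorial : ℝ) * (t⁻¹ * M^s) := by
            refine mul_le_mul_of_nonneg_right ?_ (by positivity)
            exact mul_le_mul_of_nonneg_left h5 (abs_nonneg _)
        _ = t⁻¹ * (|c s| * (s.factorial : ℝ) * M^s) := by ring
    · rw [Nat.descFactorial_eq_zero_iff_lt.mpr h]
      simp only [Nat.cast_zero, mul_zero, zero_mul, abs_zero]
      positivity
  have hbound : |t^mv * (t^k)⁻¹ *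
      (∑ s ∈ Finset.range k, c s * (s.descFactorial mv : ℝ) * ((j:ℝ)+τ)^(s-mv))| ≤ t⁻¹ * B := by
    rw [abs_mul, abs_of_nonneg hq0, hBdef, Finset.mul_sum]
    calc t^mv * (t^k)⁻¹ * |∑ s ∈ Finset.range k, c s * (s.descFactorial mv : ℝ) * ((j:ℝ)+τ)^(s-mv)|
        ≤ t^mv * (t^k)⁻¹ * ∑ s ∈ Finset.range k, |c s * (s.descFactorial mv : ℝ) * ((j:ℝ)+τ)^(s-mv)| :=
          mul_le_mul_of_nonneg_left (Finset.abs_sum_le_sum_abs _ _) hq0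
      _ = ∑ s ∈ Finset.range k, t^mv * (t^k)⁻¹ * |c s * (s.descFactorial mv : ℝ) * ((j:ℝ)+τ)^(s-mv)| := by
          rw [Finset.mul_sum]
      _ ≤ ∑ s ∈ Finset.range k, t⁻¹ * (|c s| * (s.factorial : ℝ) * M ^ s) :=
          Finset.sum_le_sum hterm
  have hfin : t⁻¹ * B < ε := by
    have h1 : t⁻¹ * B < t⁻¹ * (B + 1) := by
      have : (0:ℝ) < t⁻¹ := by positivity
      nlinarith
    have h2 : t⁻¹ ≤ ((1:ℝ)/2)^N := by
      rw [htdef, one_div, inv_pow]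
      exact inv_anti₀ (by positivity) (pow_le_pow_right₀ (by norm_num) hn)
    have h3 : t⁻¹ * (B + 1) ≤ ((1:ℝ)/2)^N * (B + 1) :=
      mul_le_mul_of_nonneg_right h2 (by positivity)
    have h4 : ((1:ℝ)/2)^N * (B + 1) < ε := by
      rw [← lt_div_iff₀ (by positivity)]
      exact hN
    linarith
  exact lt_of_le_of_lt hbound hfin
end

section
/- The Hermite subdivision operator S_{a^1} of order 1 with mask a^1 supported on {−2,…,2} given by a^1_{−2} = [[1/128, 7/256],[0, 1/16]], a^1_{−1} = [[1/2, −1/16],[15/16, −7/32]], a^1_0 = [[63/64, 0],[0, 3/8]], a^1_1 = [[1/2, 1/16],[−15/16, −7/32]], a^1_2 = [[1/128, −7/256],[0, 1/16]] satisfies the spectral condition of order 2 with spectral polynomials p_0 = 1, p_1(x) = x, p_2(x) = x²/2 − 1/12; that is, S_{a^1} v_{p_k} = 2^{-k} v_{p_k} for k = 0, 1, 2. -/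
noncomputable def a1 (j : ℤ) : Matrix (Fin 2) (Fin 2) ℝ :=
  if j = -2 then !![1/128, 7/256; 0, 1/16]
  else if j = -1 then !![1/2, -1/16; 15/16, -7/32]
  else if j = 0 then !![63/64, 0; 0, 3/8]
  else if j = 1 then !![1/2, 1/16; -15/16, -7/32]
  else if j = 2 then !![1/128, -7/256; 0, 1/16]
  else 0

noncomputable def a2 (j : ℤ) : Matrix (Fin 2) (Fin 2) ℝ :=
  if j = -2 then !![7/96, -25/1344; 77/384, -19/384]
  else if j = -1 then !![1/2, -5/56; 7/12, -1/24]
  else if j = 0 then !![41/48, 0; 0, 19/96]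
  else if j = 1 then !![1/2, 5/56; -7/12, -1/24]
  else if j = 2 then !![7/96, 25/1344; -77/384, -19/384]
  else 0

lemma a1_zero {n : ℤ} (h : n < -2 ∨ 2 < n) : a1 n = 0 := by
  unfold a1; split_ifs <;> first | omega | rfl

lemma subd_a1_even (c : ℤ → Fin 2 → ℝ) (i : ℤ) :
    subd a1 c (2*i) = (a1 2).mulVec (c (i-1)) + (a1 0).mulVec (c i)
      + (a1 (-2)).mulVec (c (i+1)) := by
  unfold subd
  have hsupp : (Function.support fun k : ℤ => (a1 (2*i - 2*k)).mulVec (c k))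
      ⊆ ↑({i-1, i, i+1} : Finset ℤ) := by
    intro k hk
    simp only [Finset.coe_insert, Set.mem_insert_iff, Finset.coe_singleton,
      Set.mem_singleton_iff]
    by_contra hc
    push_neg at hc
    refine hk ?_
    show (a1 (2*i - 2*k)).mulVec (c k) = 0
    rw [a1_zero (by omega), Matrix.zero_mulVec]
  rw [finsum_eq_finset_sum_of_support_subset _ hsupp,
    Finset.sum_insert (by simp only [Finset.mem_insert, Finset.mem_singleton]; omega),
    Finset.sum_insert (by simp only [Finset.mem_singleton]; omega),
    Finset.sum_singleton]
  have h1 : 2*i - 2*(i-1) = 2 := by ring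
  have h2 : 2*i - 2*i = 0 := by ring
  have h3 : 2*i - 2*(i+1) = -2 := by ring
  rw [h1, h2, h3, add_assoc]

lemma subd_a1_odd (c : ℤ → Fin 2 → ℝ) (i : ℤ) :
    subd a1 c (2*i+1) = (a1 1).mulVec (c i) + (a1 (-1)).mulVec (c (i+1)) := by
  unfold subd
  have hsupp : (Function.support fun k : ℤ => (a1 (2*i+1 - 2*k)).mulVec (c k))
      ⊆ ↑({i, i+1} : Finset ℤ) := by
    intro k hk
    simp only [Finset.coe_insert, Set.mem_insert_iff, Finset.coe_singleton,
      Set.mem_singleton_iff]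
    by_contra hc
    push_neg at hc
    refine hk ?_
    show (a1 (2*i+1 - 2*k)).mulVec (c k) = 0
    rw [a1_zero (by omega), Matrix.zero_mulVec]
  rw [finsum_eq_finset_sum_of_support_subset _ hsupp,
    Finset.sum_insert (by simp only [Finset.mem_singleton]; omega),
    Finset.sum_singleton]
  have h1 : 2*i+1 - 2*i = 1 := by ring
  have h2 : 2*i+1 - 2*(i+1) = -1 := by ring
  rw [h1, h2]

lemma deriv_quad : ∀ x : ℝ, deriv (fun y : ℝ => y^2/2 - 1/12) x = x := by
  intro x
  have h := (((hasDerivAt_pow 2 x).div_const 2).sub_const (1/12)).deriv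
  rw [h]; ring

lemma deriv_quad' : deriv (fun y : ℝ => y^2/2 - 1/12) = fun x : ℝ => x :=
  funext deriv_quad

lemma a1_m2 : a1 (-2) = !![1/128, 7/256; 0, 1/16] := by norm_num [a1]
lemma a1_m1 : a1 (-1) = !![1/2, -1/16; 15/16, -7/32] := by norm_num [a1]
lemma a1_z : a1 0 = !![63/64, 0; 0, 3/8] := by norm_num [a1]
lemma a1_p1 : a1 1 = !![1/2, 1/16; -15/16, -7/32] := by norm_num [a1]
lemma a1_p2 : a1 2 = !![1/128, -7/256; 0, 1/16] := by norm_num [a1]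

theorem a1_spectral_order_two :
    (subd a1 (vF 1 (fun _ => (1:ℝ))) = fun j => ((2:ℝ)^(0:ℕ))⁻¹ • vF 1 (fun _ => (1:ℝ)) j)
  ∧ (subd a1 (vF 1 (fun x => x)) = fun j => ((2:ℝ)^(1:ℕ))⁻¹ • vF 1 (fun x => x) j)
  ∧ (subd a1 (vF 1 (fun x => x^2/2 - 1/12))
      = fun j => ((2:ℝ)^(2:ℕ))⁻¹ • vF 1 (fun x => x^2/2 - 1/12) j) := by
  refine ⟨?_, ?_, ?_⟩ <;>
  · funext j
    rcases Int.even_or_odd j with ⟨i, hi⟩ | ⟨i, hi⟩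
    · have hj : j = 2*i := by omega
      subst hj
      rw [subd_a1_even]
      funext m
      fin_cases m <;>
        simp only [vF, a1_m2, a1_m1, a1_z, a1_p1, a1_p2, Pi.add_apply,
          Pi.smul_apply, smul_eq_mul, Matrix.mulVec, dotProduct,
          Fin.sum_univ_two, Fin.isValue, Fin.val_zero, Fin.val_one,
          Matrix.cons_val', Matrix.cons_val_zero, Matrix.cons_val_one,
          Matrix.head_cons, Matrix.empty_val', Matrix.cons_val_fin_one,
          Matrix.head_fin_const, iteratedDeriv_zero, iteratedDeriv_one,
          deriv_quad, deriv_const', deriv_id''] <;>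
        norm_num [Matrix.of_apply, Matrix.cons_val_zero, Matrix.cons_val_one,
          Matrix.head_cons] <;>
        push_cast <;> ring
    · subst hi
      rw [subd_a1_odd]
      funext m
      fin_cases m <;>
        simp only [vF, a1_m2, a1_m1, a1_z, a1_p1, a1_p2, Pi.add_apply,
          Pi.smul_apply, smul_eq_mul, Matrix.mulVec, dotProduct,
          Fin.sum_univ_two, Fin.isValue, Fin.val_zero, Fin.val_one,
          Matrix.cons_val', Matrix.cons_val_zero, Matrix.cons_val_one,
          Matrix.head_cons, Matrix.empty_val', Matrix.cons_val_fin_one,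
          Matrix.head_fin_const, iteratedDeriv_zero, iteratedDeriv_one,
          deriv_quad, deriv_const', deriv_id''] <;>
        norm_num [Matrix.of_apply, Matrix.cons_val_zero, Matrix.cons_val_one,
          Matrix.head_cons] <;>
        push_cast <;> ring
end

section
/- The Hermite subdivision operator S_{a^1} with the mask a^1 given below does not satisfy the spectral condition of order 3: there is no polynomial p of degree 3 with leading coefficient 1/3! such that S_{a^1} v_p = 2^{-3} v_p. Mask on {−2,…,2}: a^1_{−2} = [[1/128, 7/256],[0, 1/16]], a^1_{−1} = [[1/2, −1/16],[15/16, −7/32]], a^1_0 = [[63/64, 0],[0, 3/8]], a^1_1 = [[1/2, 1/16],[−15/16, −7/32]], a^1_2 = [[1/128, −7/256],[0, 1/16]]. -/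
lemma a1_zero_s11 {j : ℤ} (h1 : j ≠ -2) (h2 : j ≠ -1) (h3 : j ≠ 0) (h4 : j ≠ 1) (h5 : j ≠ 2) :
    a1 j = 0 := by simp [a1, h1, h2, h3, h4, h5]

lemma subd_a1_neg_one (c : ℤ → Fin 2 → ℝ) :
    subd a1 c (-1) = (a1 1).mulVec (c (-1)) + (a1 (-1)).mulVec (c 0) := by
  show ∑ᶠ k : ℤ, (a1 ((-1) - 2*k)).mulVec (c k) = _
  rw [finsum_eq_finset_sum_of_support_subset _
    (s := ({-1, 0} : Finset ℤ)) (by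
      intro k hk
      simp only [Function.mem_support, ne_eq] at hk
      by_contra hks
      simp only [Finset.coe_insert, Finset.coe_singleton, Set.mem_insert_iff,
        Set.mem_singleton_iff] at hks
      push_neg at hks
      have hz : a1 ((-1) - 2*k) = 0 :=
        a1_zero_s11 (by omega) (by omega) (by omega) (by omega) (by omega)
      rw [hz, Matrix.zero_mulVec] at hk
      exact hk rfl)]
  rw [Finset.sum_pair (by norm_num)]
  norm_num

lemma subd_a1_zero (c : ℤ → Fin 2 → ℝ) :
    subd a1 c 0 = (a1 2).mulVec (c (-1)) + (a1 0).mulVec (c 0) + (a1 (-2)).mulVec (c 1) := by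
  show ∑ᶠ k : ℤ, (a1 (0 - 2*k)).mulVec (c k) = _
  rw [finsum_eq_finset_sum_of_support_subset _
    (s := ({-1, 0, 1} : Finset ℤ)) (by
      intro k hk
      simp only [Function.mem_support, ne_eq] at hk
      by_contra hks
      simp only [Finset.coe_insert, Finset.coe_singleton, Set.mem_insert_iff,
        Set.mem_singleton_iff] at hks
      push_neg at hks
      have hz : a1 (0 - 2*k) = 0 :=
        a1_zero_s11 (by omega) (by omega) (by omega) (by omega) (by omega)
      rw [hz, Matrix.zero_mulVec] at hk
      exact hk rfl)]
  rw [show ({-1, 0, 1} : Finset ℤ) = insert (-1) (insert 0 {1}) from rfl,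
    Finset.sum_insert (by norm_num), Finset.sum_insert (by norm_num),
    Finset.sum_singleton]
  norm_num [add_assoc]

lemma subd_a1_one (c : ℤ → Fin 2 → ℝ) :
    subd a1 c 1 = (a1 1).mulVec (c 0) + (a1 (-1)).mulVec (c 1) := by
  show ∑ᶠ k : ℤ, (a1 (1 - 2*k)).mulVec (c k) = _
  rw [finsum_eq_finset_sum_of_support_subset _
    (s := ({0, 1} : Finset ℤ)) (by
      intro k hk
      simp only [Function.mem_support, ne_eq] at hk
      by_contra hks
      simp only [Finset.coe_insert, Finset.coe_singleton, Set.mem_insert_iff,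
        Set.mem_singleton_iff] at hks
      push_neg at hks
      have hz : a1 (1 - 2*k) = 0 :=
        a1_zero_s11 (by omega) (by omega) (by omega) (by omega) (by omega)
      rw [hz, Matrix.zero_mulVec] at hk
      exact hk rfl)]
  rw [Finset.sum_pair (by norm_num)]
  norm_num

lemma deriv_cubic (a b c : ℝ) (x : ℝ) :
    deriv (fun x : ℝ => x^3/6 + a*x^2 + b*x + c) x = x^2/2 + 2*a*x + b := by
  have h : HasDerivAt (fun x : ℝ => x^3/6 + a*x^2 + b*x + c)
      (((3:ℕ) * x^(3-1) / 6 + a * ((2:ℕ) * x^(2-1))) + b * 1) x := by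
    exact ((((hasDerivAt_pow 3 x).div_const 6).add
      ((hasDerivAt_pow 2 x).const_mul a)).add
      ((hasDerivAt_id x).const_mul b)).add_const c
  rw [h.deriv]
  push_cast
  ring

theorem a1_no_spectral_order_three :
    ¬ ∃ a b c : ℝ,
      subd a1 (vF 1 (fun x => x^3/6 + a*x^2 + b*x + c))
        = fun j => ((2:ℝ)^(3:ℕ))⁻¹ • vF 1 (fun x => x^3/6 + a*x^2 + b*x + c) j := by
  rintro ⟨a, b, c, h⟩
  set f : ℝ → ℝ := fun x => x^3/6 + a*x^2 + b*x + c with hf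
  have hv0 : ∀ j : ℤ, vF 1 f j 0 = (j:ℝ)^3/6 + a*(j:ℝ)^2 + b*(j:ℝ) + c := by
    intro j; simp [vF, iteratedDeriv_zero, hf]
  have hv1 : ∀ j : ℤ, vF 1 f j 1 = (j:ℝ)^2/2 + 2*a*(j:ℝ) + b := by
    intro j
    show iteratedDeriv 1 f (j:ℝ) = _
    rw [iteratedDeriv_one, hf, deriv_cubic]
  have E1 := congrFun (congrFun h (-1)) 1
  have E0 := congrFun (congrFun h 0) 1
  have E2 := congrFun (congrFun h 1) 1
  rw [subd_a1_neg_one] at E1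
  rw [subd_a1_zero] at E0
  rw [subd_a1_one] at E2
  simp only [a1, if_true, if_false, Pi.add_apply, Pi.smul_apply, smul_eq_mul,
    Matrix.mulVec, dotProduct, Fin.sum_univ_two,
    Matrix.cons_val', Matrix.cons_val_zero, Matrix.cons_val_one, Matrix.head_cons,
    Matrix.head_fin_const, Matrix.empty_val', Matrix.cons_val_fin_one] at E1 E0 E2
  norm_num at E1 E0 E2
  simp only [hv0, hv1] at E1 E0 E2
  push_cast at E1 E0 E2
  nlinarith [E1, E0, E2]
end

section
/- The Hermite subdivision operator S_{a^2} of order 1 with mask a^2 supported on {−2,…,2} given by a^2_{−2} = [[7/96, −25/1344],[77/384, −19/384]], a^2_{−1} = [[1/2, −5/56],[7/12, −1/24]], a^2_0 = [[41/48, 0],[0, 19/96]], a^2_1 = [[1/2, 5/56],[−7/12, −1/24]], a^2_2 = [[7/96, 25/1344],[−77/384, −19/384]] satisfies the spectral condition of order 2 with spectral polynomials 1, x, x²/2 − 1/21, but does not satisfy the spectral condition of order 3. -/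
lemma a2_zero {m : ℤ} (h : m < -2 ∨ 2 < m) : a2 m = 0 := by
  unfold a2
  rw [if_neg (by omega), if_neg (by omega), if_neg (by omega), if_neg (by omega),
    if_neg (by omega)]

lemma subd_a2_apply (c : ℤ → Fin 2 → ℝ) (j : ℤ) :
    subd a2 c j = (a2 (j - 2*(j/2-1))).mulVec (c (j/2-1))
      + (a2 (j - 2*(j/2))).mulVec (c (j/2))
      + (a2 (j - 2*(j/2+1))).mulVec (c (j/2+1)) := by
  have hsupp : (Function.support fun k : ℤ => (a2 (j - 2*k)).mulVec (c k))
      ⊆ (↑({j/2-1, j/2, j/2+1} : Finset ℤ) : Set ℤ) := by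
    intro k hk
    simp only [Function.mem_support] at hk
    simp only [Finset.coe_insert, Set.mem_insert_iff, Finset.coe_singleton,
      Set.mem_singleton_iff]
    by_contra h'
    push_neg at h'
    exact hk (by rw [a2_zero (by omega), Matrix.zero_mulVec])
  show (∑ᶠ k : ℤ, (a2 (j - 2*k)).mulVec (c k)) = _
  rw [finsum_eq_finset_sum_of_support_subset _ hsupp]
  rw [Finset.sum_insert (by simp only [Finset.mem_insert, Finset.mem_singleton]; omega),
    Finset.sum_insert (by simp only [Finset.mem_singleton]; omega),
    Finset.sum_singleton, add_assoc]

lemma vF_one : vF 1 (fun _ => (1:ℝ)) = fun _ => ![1, 0] := by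
  funext j m
  fin_cases m
  · simp [vF]
  · simp [vF, iteratedDeriv_one]

lemma vF_id : vF 1 (fun x => x) = fun j : ℤ => ![(j:ℝ), 1] := by
  funext j m
  fin_cases m
  · simp [vF]
  · simp [vF, iteratedDeriv_one]

lemma vF_quad : vF 1 (fun x : ℝ => x^2/2 - 1/21) = fun j : ℤ => ![(j:ℝ)^2/2 - 1/21, (j:ℝ)] := by
  have hd : ∀ x : ℝ, deriv (fun x : ℝ => x^2/2 - 1/21) x = x := by
    intro x
    have h : HasDerivAt (fun x : ℝ => x^2/2 - 1/21) x x := by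
      have := ((hasDerivAt_pow 2 x).div_const 2).sub_const (1/21)
      refine this.congr_deriv ?_
      simp only [Nat.cast_ofNat, Nat.reduceSub]
      ring
    exact h.deriv
  funext j m
  fin_cases m
  · simp [vF]
  · simp only [vF]
    rw [iteratedDeriv_one, hd]
    simp

lemma vF_cubic (a b c : ℝ) :
    vF 1 (fun x : ℝ => x^3/6 + a*x^2 + b*x + c)
      = fun j : ℤ => ![(j:ℝ)^3/6 + a*(j:ℝ)^2 + b*(j:ℝ) + c, (j:ℝ)^2/2 + 2*a*(j:ℝ) + b] := by
  have hd : ∀ x : ℝ, deriv (fun x : ℝ => x^3/6 + a*x^2 + b*x + c) x = x^2/2 + 2*a*x + b := by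
    intro x
    have h : HasDerivAt (fun x : ℝ => x^3/6 + a*x^2 + b*x + c) (x^2/2 + 2*a*x + b) x := by
      have := ((((hasDerivAt_pow 3 x).div_const 6).add
        ((hasDerivAt_pow 2 x).const_mul a)).add ((hasDerivAt_id x).const_mul b)).add_const c
      refine this.congr_deriv ?_
      simp only [Nat.cast_ofNat, Nat.reduceSub]
      ring
    exact h.deriv
  funext j m
  fin_cases m
  · simp [vF]
  · simp only [vF]
    rw [iteratedDeriv_one, hd]
    simp

theorem a2_spectral_order_two_not_three :
    ((subd a2 (vF 1 (fun _ => (1:ℝ))) = fun j => ((2:ℝ)^(0:ℕ))⁻¹ • vF 1 (fun _ => (1:ℝ)) j)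
  ∧ (subd a2 (vF 1 (fun x => x)) = fun j => ((2:ℝ)^(1:ℕ))⁻¹ • vF 1 (fun x => x) j)
  ∧ (subd a2 (vF 1 (fun x => x^2/2 - 1/21))
      = fun j => ((2:ℝ)^(2:ℕ))⁻¹ • vF 1 (fun x => x^2/2 - 1/21) j))
  ∧ ¬ ∃ a b c : ℝ,
      subd a2 (vF 1 (fun x => x^3/6 + a*x^2 + b*x + c))
        = fun j => ((2:ℝ)^(3:ℕ))⁻¹ • vF 1 (fun x => x^3/6 + a*x^2 + b*x + c) j := by
  refine ⟨⟨?_, ?_, ?_⟩, ?_⟩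
  · rw [vF_one]
    funext j m
    rw [subd_a2_apply]
    rcases Int.even_or_odd j with ⟨q, rfl⟩ | ⟨q, rfl⟩
    · have hq : (q+q)/2 = q := by omega
      rw [hq, show (q+q) - 2*(q-1) = 2 by ring, show (q+q) - 2*q = 0 by ring,
        show (q+q) - 2*(q+1) = -2 by ring]
      fin_cases m <;>
        simp [a2, Matrix.mulVec, dotProduct, Fin.sum_univ_two] <;> norm_num
    · have hq : (2*q+1)/2 = q := by omega
      rw [hq, show (2*q+1) - 2*(q-1) = 3 by ring, show (2*q+1) - 2*q = 1 by ring,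
        show (2*q+1) - 2*(q+1) = -1 by ring]
      fin_cases m <;>
        simp [a2, Matrix.mulVec, dotProduct, Fin.sum_univ_two] <;> norm_num
  · rw [vF_id]
    funext j m
    rw [subd_a2_apply]
    rcases Int.even_or_odd j with ⟨q, rfl⟩ | ⟨q, rfl⟩
    · have hq : (q+q)/2 = q := by omega
      rw [hq, show (q+q) - 2*(q-1) = 2 by ring, show (q+q) - 2*q = 0 by ring,
        show (q+q) - 2*(q+1) = -2 by ring]
      fin_cases m <;>
        simp [a2, Matrix.mulVec, dotProduct, Fin.sum_univ_two] <;> ring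
    · have hq : (2*q+1)/2 = q := by omega
      rw [hq, show (2*q+1) - 2*(q-1) = 3 by ring, show (2*q+1) - 2*q = 1 by ring,
        show (2*q+1) - 2*(q+1) = -1 by ring]
      fin_cases m <;>
        simp [a2, Matrix.mulVec, dotProduct, Fin.sum_univ_two] <;> ring
  · rw [vF_quad]
    funext j m
    rw [subd_a2_apply]
    rcases Int.even_or_odd j with ⟨q, rfl⟩ | ⟨q, rfl⟩
    · have hq : (q+q)/2 = q := by omega
      rw [hq, show (q+q) - 2*(q-1) = 2 by ring, show (q+q) - 2*q = 0 by ring,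
        show (q+q) - 2*(q+1) = -2 by ring]
      fin_cases m <;>
        simp [a2, Matrix.mulVec, dotProduct, Fin.sum_univ_two] <;> ring
    · have hq : (2*q+1)/2 = q := by omega
      rw [hq, show (2*q+1) - 2*(q-1) = 3 by ring, show (2*q+1) - 2*q = 1 by ring,
        show (2*q+1) - 2*(q+1) = -1 by ring]
      fin_cases m <;>
        simp [a2, Matrix.mulVec, dotProduct, Fin.sum_univ_two] <;> ring
  · rintro ⟨a, b, c, h⟩
    rw [vF_cubic] at h
    have h0 := congrFun (congrFun h 0) 1
    have h1 := congrFun (congrFun h 1) 1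
    have hm := congrFun (congrFun h (-1)) 1
    rw [subd_a2_apply] at h0 h1 hm
    norm_num [a2, Matrix.mulVec, dotProduct, Fin.sum_univ_two] at h0 h1 hm
    linarith
end

section
/- Neither S_{a^1} nor S_{a^2} (masks as specified) reproduces all polynomials of degree 2 with primal parametrization τ = 0: for initial data c^{[0]}_j = [j²/2, j]^T, the first iterate c^{[1]} = D^{-1} S_A c^{[0]} does not equal j ↦ [(j/2)²/2, j/2]^T. -/
lemma sum3 {M : Type*} [AddCommMonoid M] (f : ℤ → M)
    (h : ∀ k : ℤ, k ≠ -1 → k ≠ 0 → k ≠ 1 → f k = 0) :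
    ∑ᶠ k, f k = f (-1) + f 0 + f 1 := by
  rw [finsum_eq_finset_sum_of_support_subset f (s := ({-1, 0, 1} : Finset ℤ))]
  · rw [show ({-1, 0, 1} : Finset ℤ) = {-1} ∪ {0} ∪ {1} by rfl]
    rw [Finset.sum_union (by decide), Finset.sum_union (by decide)]
    simp
  · intro k hk
    simp only [Function.mem_support, ne_eq, not_not] at hk ⊢
    by_contra hmem
    simp only [Finset.coe_insert, Set.mem_insert_iff, Finset.coe_singleton,
      Set.mem_singleton_iff] at hmem
    push_neg at hmem
    exact hk (h k hmem.1 hmem.2.1 hmem.2.2)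

lemma subd_zero_zero {A : ℤ → Matrix (Fin 2) (Fin 2) ℝ}
    (hA : ∀ i : ℤ, i < -2 ∨ 2 < i → A i = 0) (c : ℤ → Fin 2 → ℝ) :
    subd A c 0 = (A 2).mulVec (c (-1)) + (A 0).mulVec (c 0) + (A (-2)).mulVec (c 1) := by
  show (∑ᶠ k : ℤ, (A (0 - 2*k)).mulVec (c k)) = _
  rw [sum3]
  · norm_num
  · intro k h1 h2 h3
    rw [hA _ (by omega), Matrix.zero_mulVec]

theorem a1_a2_no_quadratic_reproduction :
    (Dinv 1 1 (subd a1 (fun j => ![(j:ℝ)^2/2, (j:ℝ)]))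
      ≠ fun (j : ℤ) => ![((j:ℝ)/2)^2/2, (j:ℝ)/2])
  ∧ (Dinv 1 1 (subd a2 (fun j => ![(j:ℝ)^2/2, (j:ℝ)]))
      ≠ fun (j : ℤ) => ![((j:ℝ)/2)^2/2, (j:ℝ)/2]) := by
  constructor
  · intro h
    have h0 := congrFun (congrFun h 0) 0
    rw [Dinv, subd_zero_zero (A := a1) (by intro i hi; simp only [a1]; rw [if_neg (by omega), if_neg (by omega), if_neg (by omega), if_neg (by omega), if_neg (by omega)]) _] at h0
    simp only [a1] at h0
    norm_num [Matrix.mulVec, dotProduct, Fin.sum_univ_two, Matrix.cons_val_zero,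
      Matrix.cons_val_one, Matrix.head_cons] at h0
  · intro h
    have h0 := congrFun (congrFun h 0) 0
    rw [Dinv, subd_zero_zero (A := a2) (by intro i hi; simp only [a2]; rw [if_neg (by omega), if_neg (by omega), if_neg (by omega), if_neg (by omega), if_neg (by omega)]) _] at h0
    simp only [a2] at h0
    norm_num [Matrix.mulVec, dotProduct, Fin.sum_univ_two, Matrix.cons_val_zero,
      Matrix.cons_val_one, Matrix.head_cons] at h0
end
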